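/- arXiv:2506.00810 — 15 statements merged into one kernel-verified Lean document; each statement's English description precedes it below -/
import Mathlib

section
/- For a metric space (X,d), a point p ∈ X, and x, y ∈ X \ {p}, the scale-invariant Cassinian distance satisfies τ_p(x,y) ≤ u_p(x,y), where u_p is Ibragimov's metric on X \ {p}. -/
/-- τ_p ≤ u_p in a once-punctured metric space. -/
theorem tau_le_u {X : Type*} [MetricSpace X] (p x y : X) (hx : x ≠ p) (hy : y ≠ p) :
    Real.log (1 + 2 * dist x y / Real.sqrt (dist x p * dist y p)) ≤
      2 * Real.log ((dist x y + max (dist x p) (dist y p)) /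
        Real.sqrt (dist x p * dist y p)) := by
  set a := dist x p with ha
  set b := dist y p with hb
  set t := dist x y with ht
  have hap : 0 < a := dist_pos.mpr hx
  have hbp : 0 < b := dist_pos.mpr hy
  have htn : 0 ≤ t := dist_nonneg
  set s := Real.sqrt (a * b) with hs
  have hsp : 0 < s := Real.sqrt_pos.mpr (by positivity)
  have hs2 : s ^ 2 = a * b := Real.sq_sqrt (by positivity)
  set M := max a b with hM
  have hsM : s ≤ M := by
    rw [hs]
    calc Real.sqrt (a * b) ≤ Real.sqrt (M * M) := by
          apply Real.sqrt_le_sqrt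
          exact mul_le_mul (le_max_left a b) (le_max_right a b) hbp.le
            (le_trans hap.le (le_max_left a b))
      _ = M := by
          rw [Real.sqrt_mul_self (le_trans hap.le (le_max_left a b))]
  have key : 1 + 2 * t / s ≤ ((t + M) / s) ^ 2 := by
    have h1 : 1 + 2 * t / s = (s ^ 2 + 2 * t * s) / s ^ 2 := by
      field_simp
    rw [h1, div_pow]
    apply div_le_div_of_nonneg_right _ (by positivity)
    nlinarith [hsM, htn, hsp]
  calc Real.log (1 + 2 * t / s) ≤ Real.log (((t + M) / s) ^ 2) :=
        Real.log_le_log (by positivity) key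
    _ = 2 * Real.log ((t + M) / s) := by
        rw [Real.log_pow]; norm_num
end

section
/- For a metric space (X,d), a point p ∈ X, and x, y ∈ X \ {p}, one has u_p(x,y) ≤ 2 τ_p(x,y). -/
/-- u_p ≤ 2 τ_p in a once-punctured metric space. -/
theorem u_le_two_tau {X : Type*} [MetricSpace X] (p x y : X) (hx : x ≠ p) (hy : y ≠ p) :
    2 * Real.log ((dist x y + max (dist x p) (dist y p)) /
        Real.sqrt (dist x p * dist y p)) ≤
      2 * Real.log (1 + 2 * dist x y / Real.sqrt (dist x p * dist y p)) := by
  have ha : 0 < dist x p := dist_pos.2 hx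
  have hb : 0 < dist y p := dist_pos.2 hy
  have hs : 0 < Real.sqrt (dist x p * dist y p) := Real.sqrt_pos.2 (by positivity)
  have hmin : min (dist x p) (dist y p) ≤ Real.sqrt (dist x p * dist y p) := by
    rcases le_total (dist x p) (dist y p) with h | h
    · rw [min_eq_left h]
      calc dist x p = Real.sqrt (dist x p * dist x p) := by
            rw [Real.sqrt_mul_self ha.le]
        _ ≤ Real.sqrt (dist x p * dist y p) := by
            apply Real.sqrt_le_sqrt; nlinarith
    · rw [min_eq_right h]
      calc dist y p = Real.sqrt (dist y p * dist y p) := by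
            rw [Real.sqrt_mul_self hb.le]
        _ ≤ Real.sqrt (dist x p * dist y p) := by
            apply Real.sqrt_le_sqrt; nlinarith
  have habs : |dist x p - dist y p| ≤ dist x y := abs_dist_sub_le x y p
  have hmax : max (dist x p) (dist y p) ≤
      Real.sqrt (dist x p * dist y p) + dist x y := by
    have h1 : max (dist x p) (dist y p) - min (dist x p) (dist y p)
        = |dist y p - dist x p| := max_sub_min_eq_abs _ _
    have h2 : |dist y p - dist x p| = |dist x p - dist y p| := abs_sub_comm _ _
    linarith
  have hM : 0 < max (dist x p) (dist y p) := lt_max_of_lt_left ha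
  have hApos : 0 < (dist x y + max (dist x p) (dist y p)) /
      Real.sqrt (dist x p * dist y p) :=
    div_pos (add_pos_of_nonneg_of_pos dist_nonneg hM) hs
  have key : (dist x y + max (dist x p) (dist y p)) /
      Real.sqrt (dist x p * dist y p) ≤
      1 + 2 * dist x y / Real.sqrt (dist x p * dist y p) := by
    rw [show (1 : ℝ) + 2 * dist x y / Real.sqrt (dist x p * dist y p)
        = (Real.sqrt (dist x p * dist y p) + 2 * dist x y) /
          Real.sqrt (dist x p * dist y p) by field_simp]
    exact (div_le_div_iff_of_pos_right hs).2 (by linarith)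
  have hlog : Real.log ((dist x y + max (dist x p) (dist y p)) /
      Real.sqrt (dist x p * dist y p)) ≤
      Real.log (1 + 2 * dist x y / Real.sqrt (dist x p * dist y p)) :=
    Real.log_le_log hApos key
  linarith
end

section
/- In the punctured Euclidean space ℝⁿ \ {0}, with x = e₁ and y = t·e₁ for 0 < t < 1, the ratio τ_0(x,y)/u_0(x,y) tends to 1/2 as t → 0⁺; hence the constant 2 in the inequality u_p ≤ 2 τ_p is sharp. -/
open Filter Real

lemma div_atBot_aux {f g : ℝ → ℝ} {l : Filter ℝ} {a : ℝ}
    (hf : Tendsto f l (nhds a)) (hg : Tendsto g l atBot) :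
    Tendsto (fun x => f x / g x) l (nhds 0) := by
  have hg' : Tendsto (fun x => -g x) l atTop := tendsto_neg_atTop_iff.mpr hg
  have h := (hf.div_atTop hg').neg
  simpa [div_neg] using h

lemma ratio_aux (A B L : ℝ) (hL : L ≠ 0) :
    (A - L) / (2 * (B - L)) = (1 - A / L) / (2 - 2 * (B / L)) := by
  rcases eq_or_ne B L with h | h
  · subst h
    simp [div_self hL]
  · have h1 : B - L ≠ 0 := sub_ne_zero.mpr h
    have h2 : 2 - 2 * (B / L) ≠ 0 := by
      intro hc
      apply h1
      have : B / L = 1 := by linarith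
      field_simp at this
      linarith
    rw [div_eq_div_iff (mul_ne_zero two_ne_zero h1) h2]
    field_simp
    ring

/-- Sharpness of u_p ≤ 2 τ_p: in ℝⁿ \ {0} with x = e₁, y = t e₁,
the ratio τ₀/u₀ tends to 1/2 as t → 0⁺. -/
theorem tau_u_ratio_sharp (n : ℕ) (hn : 0 < n)
    (x : EuclideanSpace ℝ (Fin n)) (hx : x = EuclideanSpace.single ⟨0, hn⟩ 1) :
    Filter.Tendsto (fun t : ℝ =>
      Real.log (1 + 2 * dist x (t • x) / Real.sqrt (dist x 0 * dist (t • x) 0)) /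
        (2 * Real.log ((dist x (t • x) + max (dist x 0) (dist (t • x) 0)) /
          Real.sqrt (dist x 0 * dist (t • x) 0))))
      (nhdsWithin 0 (Set.Ioo 0 1)) (nhds (1 / 2)) := by
  have hxnorm : ‖x‖ = 1 := by
    rw [hx, EuclideanSpace.norm_single]; simp
  -- the simplified target function
  set F : ℝ → ℝ := fun t =>
    (1 - Real.log (Real.sqrt t + 2 - 2 * t) / Real.log (Real.sqrt t)) /
      (2 - 2 * (Real.log (2 - t) / Real.log (Real.sqrt t)))
  -- log √t → -∞
  have hL : Tendsto (fun t : ℝ => Real.log (Real.sqrt t)) (nhdsWithin 0 (Set.Ioo 0 1)) atBot := by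
    have h1 : Tendsto Real.log (nhdsWithin 0 (Set.Ioi 0)) atBot :=
      Real.tendsto_log_nhdsGT_zero
    have h2 : Tendsto (fun t : ℝ => Real.log t) (nhdsWithin 0 (Set.Ioo 0 1)) atBot :=
      h1.mono_left (nhdsWithin_mono _ (fun t ht => ht.1))
    have h3 : Tendsto (fun t : ℝ => Real.log t / 2) (nhdsWithin 0 (Set.Ioo 0 1)) atBot :=
      h2.atBot_div_const two_pos
    refine h3.congr' ?_
    filter_upwards [self_mem_nhdsWithin] with t ht
    rw [Real.log_sqrt ht.1.le]
  -- numerator inner log tends to log 2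
  have hA : Tendsto (fun t : ℝ => Real.log (Real.sqrt t + 2 - 2 * t))
      (nhdsWithin 0 (Set.Ioo 0 1)) (nhds (Real.log 2)) := by
    have hc : Tendsto (fun t : ℝ => Real.sqrt t + 2 - 2 * t)
        (nhdsWithin 0 (Set.Ioo 0 1)) (nhds 2) := by
      have hcont : Continuous fun t : ℝ => Real.sqrt t + 2 - 2 * t := by continuity
      have h0 : Tendsto (fun t : ℝ => Real.sqrt t + 2 - 2 * t) (nhds 0) (nhds 2) := by
        simpa using hcont.tendsto 0
      exact h0.mono_left nhdsWithin_le_nhds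
    exact hc.log two_ne_zero
  have hB : Tendsto (fun t : ℝ => Real.log (2 - t))
      (nhdsWithin 0 (Set.Ioo 0 1)) (nhds (Real.log 2)) := by
    have hc : Tendsto (fun t : ℝ => 2 - t) (nhdsWithin 0 (Set.Ioo 0 1)) (nhds 2) := by
      have hcont : Continuous fun t : ℝ => 2 - t := by continuity
      have h0 : Tendsto (fun t : ℝ => 2 - t) (nhds 0) (nhds 2) := by
        simpa using hcont.tendsto 0
      exact h0.mono_left nhdsWithin_le_nhds
    exact hc.log two_ne_zero
  have hF : Tendsto F (nhdsWithin 0 (Set.Ioo 0 1)) (nhds (1 / 2)) := by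
    have hA0 : Tendsto (fun t : ℝ => Real.log (Real.sqrt t + 2 - 2 * t) / Real.log (Real.sqrt t))
        (nhdsWithin 0 (Set.Ioo 0 1)) (nhds 0) := div_atBot_aux hA hL
    have hB0 : Tendsto (fun t : ℝ => Real.log (2 - t) / Real.log (Real.sqrt t))
        (nhdsWithin 0 (Set.Ioo 0 1)) (nhds 0) := div_atBot_aux hB hL
    have hnum : Tendsto (fun t : ℝ => 1 - Real.log (Real.sqrt t + 2 - 2 * t) / Real.log (Real.sqrt t))
        (nhdsWithin 0 (Set.Ioo 0 1)) (nhds 1) := by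
      simpa using (tendsto_const_nhds.sub hA0)
    have hden : Tendsto (fun t : ℝ => 2 - 2 * (Real.log (2 - t) / Real.log (Real.sqrt t)))
        (nhdsWithin 0 (Set.Ioo 0 1)) (nhds 2) := by
      simpa using (tendsto_const_nhds.sub (tendsto_const_nhds.mul hB0))
    have := hnum.div hden two_ne_zero
    exact this
  refine hF.congr' ?_
  filter_upwards [self_mem_nhdsWithin] with t ht
  have ht0 : 0 < t := ht.1
  have ht1 : t < 1 := ht.2
  have hst : 0 < Real.sqrt t := Real.sqrt_pos.mpr ht0
  have hst1 : Real.sqrt t < 1 := by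
    rw [show (1 : ℝ) = Real.sqrt 1 by simp]
    exact Real.sqrt_lt_sqrt ht0.le ht1
  have hLne : Real.log (Real.sqrt t) ≠ 0 :=
    ne_of_lt (Real.log_neg hst hst1)
  -- compute the distances
  have hd1 : dist x (t • x) = 1 - t := by
    rw [dist_eq_norm, show x - t • x = (1 - t) • x by module, norm_smul, hxnorm]
    simp [abs_of_pos (by linarith : (0:ℝ) < 1 - t)]
  have hd2 : dist x 0 = 1 := by rw [dist_zero_right, hxnorm]
  have hd3 : dist (t • x) 0 = t := by
    rw [dist_zero_right, norm_smul, hxnorm]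
    simp [abs_of_pos ht0]
  rw [hd1, hd2, hd3, max_eq_left ht1.le, one_mul]
  have key1 : 1 + 2 * (1 - t) / Real.sqrt t = (Real.sqrt t + 2 - 2 * t) / Real.sqrt t := by
    field_simp; ring
  have key2 : 1 - t + 1 = 2 - t := by ring
  rw [key1, key2]
  rw [Real.log_div (ne_of_gt (by nlinarith : (0:ℝ) < Real.sqrt t + 2 - 2 * t)) (ne_of_gt hst),
      Real.log_div (ne_of_gt (by linarith : (0:ℝ) < 2 - t)) (ne_of_gt hst)]
  rw [show 2 * (Real.log (2 - t) - Real.log (Real.sqrt t))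
      = 2 * (Real.log (2 - t) - Real.log (Real.sqrt t)) from rfl]
  exact (ratio_aux _ _ _ hLne).symm
end

section
/- Let (X,d) be a metric space and p₁,…,p_k ∈ X with D = X \ {p₁,…,p_k}. Then for all x, y ∈ D, the average scale-invariant Cassinian metric satisfies τ̂_D(x,y) ≤ u_D(x,y). -/
/-- The average scale-invariant Cassinian metric satisfies τ̂_D ≤ u_D. -/
theorem avg_tau_le_u {X : Type*} [MetricSpace X] (k : ℕ) (hk : 0 < k) (p : Fin k → X)
    (x y : X) (hx : ∀ i, x ≠ p i) (hy : ∀ i, y ≠ p i) :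
    (1 / (k : ℝ)) * ∑ i : Fin k,
        Real.log (1 + 2 * dist x y / Real.sqrt (dist x (p i) * dist y (p i))) ≤
      2 * Real.log ((dist x y + max (⨅ i, dist x (p i)) (⨅ i, dist y (p i))) /
        Real.sqrt ((⨅ i, dist x (p i)) * (⨅ i, dist y (p i)))) := by
  haveI : Nonempty (Fin k) := ⟨⟨0, hk⟩⟩
  set d := dist x y with hd
  set dx := ⨅ i, dist x (p i) with hdx
  set dy := ⨅ i, dist y (p i) with hdy
  have hbx : BddBelow (Set.range fun i => dist x (p i)) :=
    ⟨0, by rintro _ ⟨i, rfl⟩; exact dist_nonneg⟩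
  have hby : BddBelow (Set.range fun i => dist y (p i)) :=
    ⟨0, by rintro _ ⟨i, rfl⟩; exact dist_nonneg⟩
  have hdxpos : 0 < dx := by
    obtain ⟨j, hj⟩ := exists_eq_ciInf_of_finite (f := fun i => dist x (p i))
    rw [hdx, ← hj]
    exact dist_pos.2 (hx j)
  have hdypos : 0 < dy := by
    obtain ⟨j, hj⟩ := exists_eq_ciInf_of_finite (f := fun i => dist y (p i))
    rw [hdy, ← hj]
    exact dist_pos.2 (hy j)
  set m := max dx dy with hm
  set s := Real.sqrt (dx * dy) with hs
  have hspos : 0 < s := Real.sqrt_pos.2 (mul_pos hdxpos hdypos)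
  have hsm : s ≤ m := by
    rw [hs]
    calc Real.sqrt (dx * dy) ≤ Real.sqrt (m * m) := by
          apply Real.sqrt_le_sqrt
          exact mul_le_mul (le_max_left _ _) (le_max_right _ _) hdypos.le
            (le_trans hdxpos.le (le_max_left _ _))
      _ = m := Real.sqrt_mul_self (le_trans hdxpos.le (le_max_left _ _))
  have hdnn : 0 ≤ d := dist_nonneg
  set B := Real.log ((d + m) ^ 2 / (dx * dy)) with hB
  have hterm : ∀ i : Fin k,
      Real.log (1 + 2 * d / Real.sqrt (dist x (p i) * dist y (p i))) ≤ B := by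
    intro i
    have hxi : 0 < dist x (p i) := dist_pos.2 (hx i)
    have hyi : 0 < dist y (p i) := dist_pos.2 (hy i)
    have hsi : 0 < Real.sqrt (dist x (p i) * dist y (p i)) :=
      Real.sqrt_pos.2 (mul_pos hxi hyi)
    apply Real.log_le_log (by positivity)
    have h1 : 2 * d / Real.sqrt (dist x (p i) * dist y (p i)) ≤ 2 * d / s := by
      apply div_le_div_of_nonneg_left (by positivity) hspos
      apply Real.sqrt_le_sqrt
      exact mul_le_mul (ciInf_le hbx i) (ciInf_le hby i) hdypos.le hxi.le
    have h2 : 1 + 2 * d / s ≤ (d + m) ^ 2 / (dx * dy) := by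
      have hss : s ^ 2 = dx * dy := Real.sq_sqrt (mul_pos hdxpos hdypos).le
      have heq : 1 + 2 * d / s = (s ^ 2 + 2 * d * s) / s ^ 2 := by
        field_simp
      rw [heq, ← hss]
      apply div_le_div_of_nonneg_right ?_ (by positivity)
      nlinarith [hsm, hdnn, hspos.le]
    linarith
  have hsum : ∑ i : Fin k,
      Real.log (1 + 2 * d / Real.sqrt (dist x (p i) * dist y (p i))) ≤ (k : ℝ) * B := by
    calc (∑ i : Fin k, Real.log (1 + 2 * d / Real.sqrt (dist x (p i) * dist y (p i))))
        ≤ ∑ _i : Fin k, B := Finset.sum_le_sum fun i _ => hterm i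
      _ = (k : ℝ) * B := by simp [Finset.sum_const, Finset.card_univ, nsmul_eq_mul]
  have hkpos : (0 : ℝ) < k := Nat.cast_pos.2 hk
  have hfin : 2 * Real.log ((d + m) / s) = B := by
    have h := Real.log_pow (n := 2) (x := (d + m) / s)
    rw [div_pow, Real.sq_sqrt (mul_pos hdxpos hdypos).le] at h
    rw [hB, h]; norm_num
  calc (1 / (k : ℝ)) * ∑ i : Fin k,
        Real.log (1 + 2 * d / Real.sqrt (dist x (p i) * dist y (p i)))
      ≤ (1 / (k : ℝ)) * ((k : ℝ) * B) := by
        apply mul_le_mul_of_nonneg_left hsum (by positivity)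
    _ = B := by field_simp
    _ = 2 * Real.log ((d + m) / s) := hfin.symm
end

section
/- Let (X,d) be a metric space, p ∈ X, and x, y ∈ X \ {p}. Then (1/2)·j̃_p(x,y) ≤ τ_p(x,y) ≤ 2·j̃_p(x,y), where j̃_p is the distance ratio metric on X \ {p}. -/
private lemma key_low (a b t : ℝ) (ha : 0 < a) (hab : a ≤ b) (ht : 0 ≤ t)
    (htr : b - a ≤ t) :
    1 + t / a ≤ (1 + 2 * t / Real.sqrt (a * b)) ^ 2 := by
  set s := Real.sqrt (a * b) with hsdef
  have hb : 0 < b := lt_of_lt_of_le ha hab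
  have hs : 0 < s := Real.sqrt_pos.2 (by positivity)
  have hs2 : s ^ 2 = a * b := Real.sq_sqrt (by positivity)
  have has : a ≤ s := by
    rw [hsdef]
    exact (Real.le_sqrt ha.le (by positivity)).2 (by nlinarith)
  have htr' : s ^ 2 - a ^ 2 ≤ a * t := by nlinarith
  have key : t * s ^ 2 ≤ 4 * a * s * t + 4 * a * t ^ 2 := by
    nlinarith [mul_nonneg ht (sub_nonneg.2 has), mul_nonneg ht hs.le,
      mul_nonneg ht ha.le]
  have e1 : (1 : ℝ) + t / a = (a + t) / a := by field_simp
  have e2 : (1 + 2 * t / s) ^ 2 = (s ^ 2 + 4 * s * t + 4 * t ^ 2) / s ^ 2 := by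
    field_simp; ring
  rw [e1, e2, div_le_div_iff₀ ha (by positivity)]
  nlinarith [key]

private lemma aux_low (a b t : ℝ) (ha : 0 < a) (hb : 0 < b) (ht : 0 ≤ t)
    (htab : b - a ≤ t) (htba : a - b ≤ t) :
    1 + t / min a b ≤ (1 + 2 * t / Real.sqrt (a * b)) ^ 2 := by
  rcases le_total a b with h | h
  · rw [min_eq_left h]; exact key_low a b t ha h ht htab
  · rw [min_eq_right h, show a * b = b * a from mul_comm a b]; exact key_low b a t hb h ht htba

private lemma aux_up (a b t : ℝ) (ha : 0 < a) (hb : 0 < b) (ht : 0 ≤ t) :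
    1 + 2 * t / Real.sqrt (a * b) ≤ (1 + t / min a b) ^ 2 := by
  set s := Real.sqrt (a * b) with hsdef
  set m := min a b with hmdef
  have hm : 0 < m := lt_min ha hb
  have hs : 0 < s := Real.sqrt_pos.2 (by positivity)
  have hms : m ≤ s := by
    rw [hsdef]
    exact (Real.le_sqrt hm.le (by positivity)).2
      (by nlinarith [min_le_left a b, min_le_right a b])
  have h1 : 2 * t / s ≤ 2 * t / m :=
    div_le_div_of_nonneg_left (by linarith) hm hms
  have h2 : (1 : ℝ) + 2 * t / m ≤ (1 + t / m) ^ 2 := by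
    have e : 2 * t / m = 2 * (t / m) := mul_div_assoc 2 t m
    nlinarith [sq_nonneg (t / m)]
  linarith

/-- (1/2) j̃_p ≤ τ_p ≤ 2 j̃_p in once-punctured metric spaces. -/
theorem tau_jtilde_comparison {X : Type*} [MetricSpace X] (p x y : X)
    (hx : x ≠ p) (hy : y ≠ p) :
    (1 / 2) * Real.log (1 + dist x y / min (dist x p) (dist y p)) ≤
        Real.log (1 + 2 * dist x y / Real.sqrt (dist x p * dist y p)) ∧
      Real.log (1 + 2 * dist x y / Real.sqrt (dist x p * dist y p)) ≤
        2 * Real.log (1 + dist x y / min (dist x p) (dist y p)) := by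
  set a := dist x p with hadef
  set b := dist y p with hbdef
  set t := dist x y with htdef
  have ha : 0 < a := dist_pos.2 hx
  have hb : 0 < b := dist_pos.2 hy
  have ht : 0 ≤ t := dist_nonneg
  have hm : 0 < min a b := lt_min ha hb
  have hs : 0 < Real.sqrt (a * b) := Real.sqrt_pos.2 (by positivity)
  have htri : |a - b| ≤ t := abs_dist_sub_le x y p
  rw [abs_le] at htri
  have hA : (0:ℝ) < 1 + t / min a b := by positivity
  have hB : (0:ℝ) < 1 + 2 * t / Real.sqrt (a * b) := by positivity
  constructor
  · have h := Real.log_le_log hA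
      (aux_low a b t ha hb ht (by linarith [htri.1]) (by linarith [htri.2]))
    rw [Real.log_pow] at h
    push_cast at h
    linarith
  · have h := Real.log_le_log hB (aux_up a b t ha hb ht)
    rw [Real.log_pow] at h
    push_cast at h
    linarith
end

section
/- Let (X,d) be a metric space and p₁,…,p_k ∈ X with D = X \ {p₁,…,p_k}. Then for all x, y ∈ D, τ̂_D(x,y) ≤ 2·j̃_D(x,y). -/
/-- τ̂_D ≤ 2 j̃_D in arbitrary metric spaces with finitely many punctures. -/
theorem avg_tau_le_two_jtilde {X : Type*} [MetricSpace X] (k : ℕ) (hk : 0 < k)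
    (p : Fin k → X) (x y : X) (hx : ∀ i, x ≠ p i) (hy : ∀ i, y ≠ p i) :
    (1 / (k : ℝ)) * ∑ i : Fin k,
        Real.log (1 + 2 * dist x y / Real.sqrt (dist x (p i) * dist y (p i))) ≤
      2 * Real.log (1 + dist x y / min (⨅ i, dist x (p i)) (⨅ i, dist y (p i))) := by
  have hd : ∀ i, 0 < dist x (p i) := fun i => dist_pos.mpr (hx i)
  have he : ∀ i, 0 < dist y (p i) := fun i => dist_pos.mpr (hy i)
  haveI : Nonempty (Fin k) := ⟨⟨0, hk⟩⟩
  obtain ⟨i₀, hi₀⟩ := Finite.exists_min (fun i => dist x (p i))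
  obtain ⟨j₀, hj₀⟩ := Finite.exists_min (fun i => dist y (p i))
  have hx0 : 0 < ⨅ i, dist x (p i) := lt_of_lt_of_le (hd i₀) (le_ciInf hi₀)
  have hy0 : 0 < ⨅ i, dist y (p i) := lt_of_lt_of_le (he j₀) (le_ciInf hj₀)
  set m := min (⨅ i, dist x (p i)) (⨅ i, dist y (p i)) with hm
  have hm0 : 0 < m := lt_min hx0 hy0
  have hdnn : 0 ≤ dist x y := dist_nonneg
  have hterm : ∀ i, Real.log (1 + 2 * dist x y /
      Real.sqrt (dist x (p i) * dist y (p i))) ≤ 2 * Real.log (1 + dist x y / m) := by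
    intro i
    have h1 : m ≤ dist x (p i) :=
      (min_le_left _ _).trans (ciInf_le (Finite.bddBelow_range _) i)
    have h2 : m ≤ dist y (p i) :=
      (min_le_right _ _).trans (ciInf_le (Finite.bddBelow_range _) i)
    have hmle : m ≤ Real.sqrt (dist x (p i) * dist y (p i)) := by
      calc m = Real.sqrt (m * m) := by rw [Real.sqrt_mul_self hm0.le]
        _ ≤ _ := Real.sqrt_le_sqrt (mul_le_mul h1 h2 hm0.le (hd i).le)
    have hs0 : 0 < Real.sqrt (dist x (p i) * dist y (p i)) := hm0.trans_le hmle
    rw [show (2:ℝ) * Real.log (1 + dist x y / m) = Real.log ((1 + dist x y / m)^2) by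
      rw [Real.log_pow]; push_cast; ring]
    apply Real.log_le_log (by positivity)
    have hdiv : 2 * dist x y / Real.sqrt (dist x (p i) * dist y (p i))
        ≤ 2 * dist x y / m :=
      div_le_div_of_nonneg_left (by positivity) hm0 hmle
    have hq : 2 * dist x y / m ≤ 2 * (dist x y / m) := by rw [mul_div_assoc]
    nlinarith [sq_nonneg (dist x y / m)]
  have hk' : (0:ℝ) < k := Nat.cast_pos.mpr hk
  have hsum : ∑ i : Fin k, Real.log (1 + 2 * dist x y /
      Real.sqrt (dist x (p i) * dist y (p i))) ≤ k * (2 * Real.log (1 + dist x y / m)) := by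
    calc ∑ i : Fin k, Real.log (1 + 2 * dist x y /
          Real.sqrt (dist x (p i) * dist y (p i)))
        ≤ ∑ _i : Fin k, 2 * Real.log (1 + dist x y / m) :=
          Finset.sum_le_sum fun i _ => hterm i
      _ = k * (2 * Real.log (1 + dist x y / m)) := by
          rw [Finset.sum_const, Finset.card_univ, Fintype.card_fin, nsmul_eq_mul]
  calc (1 / (k:ℝ)) * ∑ i : Fin k, Real.log (1 + 2 * dist x y /
        Real.sqrt (dist x (p i) * dist y (p i)))
      ≤ (1 / (k:ℝ)) * (k * (2 * Real.log (1 + dist x y / m))) :=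
        mul_le_mul_of_nonneg_left hsum (by positivity)
    _ = 2 * Real.log (1 + dist x y / m) := by field_simp
end

section
/- Let (X,d) be a metric space, p ∈ X, and x, y ∈ X \ {p}. Then j_p(x,y) ≤ τ_p(x,y) ≤ 2·j_p(x,y), where j_p is the Gehring–Osgood distance ratio metric on X \ {p}. -/
/-- j_p ≤ τ_p ≤ 2 j_p, where j_p is the Gehring–Osgood distance ratio metric. -/
theorem tau_j_comparison {X : Type*} [MetricSpace X] (p x y : X)
    (hx : x ≠ p) (hy : y ≠ p) :
    (1 / 2) * Real.log ((1 + dist x y / dist x p) * (1 + dist x y / dist y p)) ≤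
        Real.log (1 + 2 * dist x y / Real.sqrt (dist x p * dist y p)) ∧
      Real.log (1 + 2 * dist x y / Real.sqrt (dist x p * dist y p)) ≤
        2 * ((1 / 2) * Real.log ((1 + dist x y / dist x p) * (1 + dist x y / dist y p))) := by
  set a := dist x p with ha_def
  set b := dist y p with hb_def
  set t := dist x y with ht_def
  have ha : 0 < a := dist_pos.mpr hx
  have hb : 0 < b := dist_pos.mpr hy
  have ht : 0 ≤ t := dist_nonneg
  set s := Real.sqrt (a * b) with hs_def
  have hs : 0 < s := Real.sqrt_pos.mpr (mul_pos ha hb)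
  have hs2 : s ^ 2 = a * b := Real.sq_sqrt (mul_pos ha hb).le
  have htri1 : a ≤ t + b := by
    have := dist_triangle x y p; simpa [← ha_def, ← hb_def, ← ht_def] using this
  have htri2 : b ≤ t + a := by
    have := dist_triangle y x p
    simpa [← ha_def, ← hb_def, ← ht_def, dist_comm] using this
  have h2s : 2 * s ≤ a + b := by nlinarith [sq_nonneg (a - b), sq_nonneg (a + b - 2 * s)]
  have hts : a + b ≤ t + 2 * s := by
    nlinarith [mul_nonneg (by linarith : (0:ℝ) ≤ t - a + b) (by linarith : (0:ℝ) ≤ t + a - b),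
      mul_nonneg ht hs.le, sq_nonneg (a + b - t - 2 * s)]
  have hP : (0:ℝ) < (1 + t / a) * (1 + t / b) := by positivity
  have hQ : (0:ℝ) < 1 + 2 * t / s := by positivity
  have h1 : (1 + t / a) * (1 + t / b) = (a + t) * (b + t) / (a * b) := by
    field_simp
  constructor
  · have key : (a + t) * (b + t) ≤ (s + 2 * t) ^ 2 := by
      nlinarith [mul_le_mul_of_nonneg_left hts ht, mul_nonneg ht hs.le, mul_nonneg ht ht]
    have h2 : (1 + 2 * t / s) ^ 2 = (s + 2 * t) ^ 2 / (a * b) := by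
      rw [← hs2]; field_simp
    have hPQ : (1 + t / a) * (1 + t / b) ≤ (1 + 2 * t / s) ^ 2 := by
      rw [h1, h2]
      gcongr
    have hlog := Real.log_le_log hP hPQ
    rw [Real.log_pow] at hlog
    push_cast at hlog
    linarith
  · have key : s * (s + 2 * t) ≤ (a + t) * (b + t) := by
      nlinarith [mul_le_mul_of_nonneg_left h2s ht]
    have h3 : 1 + 2 * t / s = s * (s + 2 * t) / (a * b) := by
      rw [← hs2]; field_simp
    have hQP : 1 + 2 * t / s ≤ (1 + t / a) * (1 + t / b) := by
      rw [h1, h3]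
      gcongr
    have hlog := Real.log_le_log hQ hQP
    linarith
end

section
/- Let (X,d) be a metric space and p₁,…,p_k ∈ X with D = X \ {p₁,…,p_k}. Then for all x, y ∈ D, τ̂_D(x,y) ≤ 2·j_D(x,y). -/
lemma amgm_div_aux {a b r : ℝ} (ha : 0 < a) (hb : 0 < b) (hr : 0 ≤ r) :
    2 * r / Real.sqrt (a * b) ≤ r / a + r / b := by
  have hs : 0 < Real.sqrt (a * b) := Real.sqrt_pos.2 (by positivity)
  have hs2 : Real.sqrt (a * b) ^ 2 = a * b := Real.sq_sqrt (by positivity)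
  have h2s : 2 * Real.sqrt (a * b) ≤ a + b := by
    rw [Real.sqrt_mul ha.le]
    nlinarith [sq_nonneg (Real.sqrt a - Real.sqrt b), Real.sq_sqrt ha.le,
      Real.sq_sqrt hb.le]
  rw [div_add_div _ _ ha.ne' hb.ne', div_le_div_iff₀ hs (by positivity)]
  nlinarith [mul_nonneg hr hs.le]

/-- τ̂_D ≤ 2 j_D with finitely many punctures. -/
theorem avg_tau_le_two_j {X : Type*} [MetricSpace X] (k : ℕ) (hk : 0 < k)
    (p : Fin k → X) (x y : X) (hx : ∀ i, x ≠ p i) (hy : ∀ i, y ≠ p i) :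
    (1 / (k : ℝ)) * ∑ i : Fin k,
        Real.log (1 + 2 * dist x y / Real.sqrt (dist x (p i) * dist y (p i))) ≤
      2 * ((1 / 2) * Real.log ((1 + dist x y / ⨅ i, dist x (p i)) *
        (1 + dist x y / ⨅ i, dist y (p i)))) := by
  have hne : Nonempty (Fin k) := ⟨⟨0, hk⟩⟩
  set r := dist x y with hr
  have hr0 : 0 ≤ r := dist_nonneg
  set d := ⨅ i, dist x (p i) with hd
  set e := ⨅ i, dist y (p i) with he
  have hdpos : 0 < d := by
    obtain ⟨i, hi⟩ := exists_eq_ciInf_of_finite (f := fun i => dist x (p i))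
    rw [hd, ← hi]; exact dist_pos.2 (hx i)
  have hepos : 0 < e := by
    obtain ⟨i, hi⟩ := exists_eq_ciInf_of_finite (f := fun i => dist y (p i))
    rw [he, ← hi]; exact dist_pos.2 (hy i)
  have hPpos : 0 < (1 + r / d) * (1 + r / e) := by positivity
  have key : ∀ i : Fin k,
      Real.log (1 + 2 * r / Real.sqrt (dist x (p i) * dist y (p i))) ≤
        Real.log ((1 + r / d) * (1 + r / e)) := by
    intro i
    have hdi : 0 < dist x (p i) := dist_pos.2 (hx i)
    have hei : 0 < dist y (p i) := dist_pos.2 (hy i)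
    have hdle : d ≤ dist x (p i) := ciInf_le (Finite.bddBelow_range _) i
    have hele : e ≤ dist y (p i) := ciInf_le (Finite.bddBelow_range _) i
    apply Real.log_le_log (by positivity)
    have amgm := amgm_div_aux hdi hei hr0
    have h1 : r / dist x (p i) ≤ r / d := by gcongr
    have h2 : r / dist y (p i) ≤ r / e := by gcongr
    have h3 : 0 ≤ r / d := by positivity
    have h4 : 0 ≤ r / e := by positivity
    nlinarith [mul_nonneg h3 h4]
  have hsum : ∑ i : Fin k,
      Real.log (1 + 2 * r / Real.sqrt (dist x (p i) * dist y (p i))) ≤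
        (k : ℝ) * Real.log ((1 + r / d) * (1 + r / e)) := by
    calc ∑ i : Fin k, Real.log (1 + 2 * r / Real.sqrt (dist x (p i) * dist y (p i)))
        ≤ ∑ _i : Fin k, Real.log ((1 + r / d) * (1 + r / e)) :=
          Finset.sum_le_sum fun i _ => key i
      _ = (k : ℝ) * Real.log ((1 + r / d) * (1 + r / e)) := by
          simp [Finset.sum_const, nsmul_eq_mul]
  have hk0 : (0 : ℝ) < (k : ℝ) := by exact_mod_cast hk
  have := mul_le_mul_of_nonneg_left hsum (by positivity : (0:ℝ) ≤ 1 / (k:ℝ))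
  calc (1 / (k : ℝ)) * ∑ i : Fin k,
        Real.log (1 + 2 * r / Real.sqrt (dist x (p i) * dist y (p i)))
      ≤ (1 / (k : ℝ)) * ((k : ℝ) * Real.log ((1 + r / d) * (1 + r / e))) := this
    _ = Real.log ((1 + r / d) * (1 + r / e)) := by field_simp
    _ = 2 * ((1 / 2) * Real.log ((1 + r / d) * (1 + r / e))) := by ring
end

section
/- Let (X,d) be a metric space, p ∈ X, and x, y ∈ X \ {p}. Then (1/2)·j*_p(x,y) ≤ tanh(τ_p(x,y)/2) ≤ 2·j*_p(x,y), where j*_p(x,y) = tanh(j̃_p(x,y)/2). -/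
lemma tanh_log_one_add {s : ℝ} (hs : 0 ≤ s) :
    Real.tanh (Real.log (1 + s) / 2) = s / (s + 2) := by
  have h1 : (0:ℝ) < 1 + s := by linarith
  set L := Real.log (1 + s) with hL
  have he : Real.exp (L / 2) * Real.exp (L / 2) = 1 + s := by
    rw [← Real.exp_add]
    have : L / 2 + L / 2 = L := by ring
    rw [this, hL, Real.exp_log h1]
  set e := Real.exp (L / 2) with hedef
  have hepos : 0 < e := Real.exp_pos _
  have hneg : Real.exp (-(L / 2)) = e⁻¹ := by rw [Real.exp_neg]
  rw [Real.tanh_eq_sinh_div_cosh, Real.sinh_eq, Real.cosh_eq, hneg]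
  have h2 : ((e - e⁻¹) / 2) / ((e + e⁻¹) / 2) = s / (s + 2) := by
    rw [div_eq_div_iff (by positivity) (by positivity)]
    field_simp
    nlinarith [he, hepos]
  exact h2

/-- (1/2) j*_p ≤ tanh(τ_p/2) ≤ 2 j*_p where j*_p = tanh(j̃_p/2). -/
theorem tau_jstar_comparison {X : Type*} [MetricSpace X] (p x y : X)
    (hx : x ≠ p) (hy : y ≠ p) :
    (1 / 2) * Real.tanh (Real.log (1 + dist x y / min (dist x p) (dist y p)) / 2) ≤
        Real.tanh (Real.log (1 + 2 * dist x y / Real.sqrt (dist x p * dist y p)) / 2) ∧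
      Real.tanh (Real.log (1 + 2 * dist x y / Real.sqrt (dist x p * dist y p)) / 2) ≤
        2 * Real.tanh (Real.log (1 + dist x y / min (dist x p) (dist y p)) / 2) := by
  have ha : 0 < dist x p := dist_pos.mpr hx
  have hb : 0 < dist y p := dist_pos.mpr hy
  set a := dist x p
  set b := dist y p
  set t := dist x y with ht
  have ht0 : 0 ≤ t := dist_nonneg
  set m := min a b with hm
  have hm0 : 0 < m := lt_min ha hb
  set g := Real.sqrt (a * b) with hgdef
  have hg0 : 0 < g := Real.sqrt_pos.mpr (by positivity)
  have hg2 : g * g = a * b := Real.mul_self_sqrt (by positivity)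
  have hmg : m ≤ g := by
    rw [hgdef]
    have : m * m ≤ a * b := by
      have h1 : m ≤ a := min_le_left _ _
      have h2 : m ≤ b := min_le_right _ _
      nlinarith
    calc m = Real.sqrt (m * m) := (Real.sqrt_mul_self hm0.le).symm
      _ ≤ Real.sqrt (a * b) := Real.sqrt_le_sqrt this
  have htri1 : b ≤ t + a := by
    have := dist_triangle y x p
    rw [dist_comm y x] at this
    linarith
  have htri2 : a ≤ t + b := by
    have := dist_triangle x y p
    linarith
  have hgle : g ≤ t + 4 * m := by
    have hab : a * b ≤ (t + 4 * m) * (t + 4 * m) := by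
      rcases min_cases a b with ⟨h1, h2⟩ | ⟨h1, h2⟩ <;> rw [hm, h1] <;> nlinarith
    calc g = Real.sqrt (a * b) := rfl
      _ ≤ Real.sqrt ((t + 4 * m) * (t + 4 * m)) := Real.sqrt_le_sqrt hab
      _ = t + 4 * m := Real.sqrt_mul_self (by positivity)
  have e1 : Real.tanh (Real.log (1 + t / m) / 2) = t / (t + 2 * m) := by
    rw [tanh_log_one_add (by positivity)]
    rw [div_eq_div_iff (by positivity) (by positivity)]
    field_simp
  have e2 : Real.tanh (Real.log (1 + 2 * t / g) / 2) = t / (t + g) := by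
    rw [tanh_log_one_add (by positivity)]
    rw [div_eq_div_iff (by positivity) (by positivity)]
    field_simp
  rw [e1, e2]
  constructor
  · have h3 : (1:ℝ) / 2 * (t / (t + 2 * m)) = t / ((t + 2 * m) * 2) := by
      rw [div_mul_eq_mul_div, one_mul, div_div]
    rw [h3, div_le_div_iff₀ (by positivity) (by positivity)]
    nlinarith
  · have h3 : (2:ℝ) * (t / (t + 2 * m)) = 2 * t / (t + 2 * m) := mul_div_assoc' 2 t _
    rw [h3, div_le_div_iff₀ (by positivity) (by positivity)]
    nlinarith
end

section
/- Let (X,d) be a metric space, p ∈ X, and x, y ∈ X \ {p}. Then the one-point triangular ratio s_p(x,y) = d(x,y)/(d(x,p) + d(y,p)) satisfies s_p(x,y) ≤ (e^{τ_p(x,y)} − 1)/4. -/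
/-- The one-point triangular ratio satisfies s_p ≤ (e^{τ_p} − 1)/4. -/
theorem s_le_exp_tau {X : Type*} [MetricSpace X] (p x y : X)
    (hx : x ≠ p) (hy : y ≠ p) :
    dist x y / (dist x p + dist y p) ≤
      (Real.exp (Real.log (1 + 2 * dist x y / Real.sqrt (dist x p * dist y p))) - 1) / 4 := by
  have ha : 0 < dist x p := dist_pos.mpr hx
  have hb : 0 < dist y p := dist_pos.mpr hy
  have hd : 0 ≤ dist x y := dist_nonneg
  have hs : 0 < Real.sqrt (dist x p * dist y p) := Real.sqrt_pos.mpr (by positivity)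
  have hpos : 0 < 1 + 2 * dist x y / Real.sqrt (dist x p * dist y p) := by positivity
  rw [Real.exp_log hpos]
  have h2 : 2 * Real.sqrt (dist x p * dist y p) ≤ dist x p + dist y p := by
    nlinarith [Real.sq_sqrt (mul_nonneg ha.le hb.le),
      sq_nonneg (Real.sqrt (dist x p * dist y p) - dist x p),
      sq_nonneg (Real.sqrt (dist x p * dist y p) - dist y p),
      sq_nonneg (dist x p - dist y p)]
  have key : dist x y / (dist x p + dist y p) ≤ dist x y / (2 * Real.sqrt (dist x p * dist y p)) :=
    div_le_div_of_nonneg_left hd (by positivity) h2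
  calc dist x y / (dist x p + dist y p)
      ≤ dist x y / (2 * Real.sqrt (dist x p * dist y p)) := key
    _ = (1 + 2 * dist x y / Real.sqrt (dist x p * dist y p) - 1) / 4 := by
        field_simp; ring
end

section
/- Let (X,d) be a metric space, p ∈ X, and x ∈ X \ {p}. Then the limit as y → x of τ_p(x,y)/d(x,y) equals 2/d(x,p); that is, the density of the scale-invariant Cassinian metric at x is 2/d(x,p). -/
open Filter Real Topology

lemma log_one_add_div_self : Filter.Tendsto (fun t : ℝ => Real.log (1 + t) / t)
    (nhdsWithin 0 {0}ᶜ) (nhds 1) := by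
  have h := Real.hasDerivAt_log one_ne_zero
  rw [hasDerivAt_iff_tendsto_slope] at h
  have h2 : Tendsto (fun t : ℝ => (1 : ℝ) + t) (𝓝[≠] 0) (𝓝[≠] 1) := by
    apply tendsto_nhdsWithin_of_tendsto_nhds_of_eventually_within
    · have h0 : Tendsto (fun t : ℝ => (1 : ℝ) + t) (𝓝 0) (𝓝 (1 + 0)) :=
        tendsto_const_nhds.add tendsto_id
      simpa using h0.mono_left nhdsWithin_le_nhds
    · filter_upwards [self_mem_nhdsWithin] with t ht
      simp only [Set.mem_compl_iff, Set.mem_singleton_iff] at ht ⊢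
      intro hcon
      exact ht (by linarith)
  have h3 := h.comp h2
  rw [inv_one] at h3
  refine h3.congr fun t => ?_
  simp [Function.comp, slope, Real.log_one, div_eq_inv_mul]

/-- The density of the scale-invariant Cassinian metric at x is 2/d(x,p). -/
theorem tau_density {X : Type*} [MetricSpace X] (p x : X) (hx : x ≠ p) :
    Filter.Tendsto
      (fun y : X =>
        Real.log (1 + 2 * dist x y / Real.sqrt (dist x p * dist y p)) / dist x y)
      (nhdsWithin x {x}ᶜ) (nhds (2 / dist x p)) := by
  have hxp : 0 < dist x p := dist_pos.2 hx
  set u : X → ℝ := fun y => 2 * dist x y / Real.sqrt (dist x p * dist y p) with hu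
  have hdyp : Tendsto (fun y => dist y p) (𝓝[≠] x) (𝓝 (dist x p)) :=
    ((continuous_id.dist continuous_const).tendsto x).mono_left nhdsWithin_le_nhds
  have hsqrt : Tendsto (fun y => Real.sqrt (dist x p * dist y p)) (𝓝[≠] x)
      (𝓝 (dist x p)) := by
    have h : Tendsto (fun y => Real.sqrt (dist x p * dist y p)) (𝓝[≠] x)
        (𝓝 (Real.sqrt (dist x p * dist x p))) :=
      (Real.continuous_sqrt.tendsto _).comp (tendsto_const_nhds.mul hdyp)
    rwa [Real.sqrt_mul_self hxp.le] at h
  have hdxy : Tendsto (fun y => dist x y) (𝓝[≠] x) (𝓝 0) := by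
    have h : Tendsto (fun y : X => dist x y) (𝓝 x) (𝓝 (dist x x)) :=
      (continuous_const.dist continuous_id).tendsto x
    simpa using h.mono_left nhdsWithin_le_nhds
  have hu0 : Tendsto u (𝓝[≠] x) (𝓝 0) := by
    have h : Tendsto (fun y => 2 * dist x y / Real.sqrt (dist x p * dist y p))
        (𝓝[≠] x) (𝓝 (2 * 0 / dist x p)) :=
      (tendsto_const_nhds.mul hdxy).div hsqrt hxp.ne'
    simp only [mul_zero, zero_div] at h
    exact h
  have hpos : ∀ᶠ y in 𝓝[≠] x, 0 < u y := by
    have h1 : ∀ᶠ y in 𝓝[≠] x, 0 < Real.sqrt (dist x p * dist y p) :=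
      hsqrt.eventually (eventually_gt_nhds hxp)
    have h2 : ∀ᶠ y in 𝓝[≠] x, 0 < dist x y := by
      filter_upwards [self_mem_nhdsWithin] with y hy
      exact dist_pos.2 (Ne.symm hy)
    filter_upwards [h1, h2] with y h1 h2
    simp only [hu]
    positivity
  have hu0' : Tendsto u (𝓝[≠] x) (𝓝[≠] 0) :=
    tendsto_nhdsWithin_of_tendsto_nhds_of_eventually_within _ hu0
      (hpos.mono fun y hy => ne_of_gt hy)
  have hmain : Tendsto
      (fun y => Real.log (1 + u y) / u y * (2 / Real.sqrt (dist x p * dist y p)))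
      (𝓝[≠] x) (𝓝 (2 / dist x p)) := by
    have h2 : Tendsto (fun y => 2 / Real.sqrt (dist x p * dist y p)) (𝓝[≠] x)
        (𝓝 (2 / dist x p)) := tendsto_const_nhds.div hsqrt hxp.ne'
    have h := (log_one_add_div_self.comp hu0').mul h2
    simpa using h
  refine hmain.congr' ?_
  have h1 : ∀ᶠ y in 𝓝[≠] x, 0 < Real.sqrt (dist x p * dist y p) :=
    hsqrt.eventually (eventually_gt_nhds hxp)
  have h2 : ∀ᶠ y in 𝓝[≠] x, 0 < dist x y := by
    filter_upwards [self_mem_nhdsWithin] with y hy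
    exact dist_pos.2 (Ne.symm hy)
  filter_upwards [h1, h2, hpos] with y hs hd hup
  simp only [hu]
  set s := Real.sqrt (dist x p * dist y p) with hsdef
  have hs' : s ≠ 0 := hs.ne'
  have hd' : dist x y ≠ 0 := hd.ne'
  field_simp
end

section
/- Let (X,d) be a metric space, p ∈ X, x ∈ X \ {p}, and t ∈ [0, log 3). Then the metric-ball inclusions B_d(x, r) ⊆ B_{τ_p}(x, t) ⊆ B_d(x, R) hold, where r = ((e^t − 1)/(e^t + 1))·d(x,p) and R = ((e^t − 1)/(3 − e^t))·d(x,p). -/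
/-- Ball inclusions: B_d(x,r) ⊆ B_{τ_p}(x,t) ⊆ B_d(x,R) for t ∈ [0, log 3). -/
theorem tau_ball_inclusions {X : Type*} [MetricSpace X] (p x : X) (hx : x ≠ p)
    (t : ℝ) (ht0 : 0 ≤ t) (ht : t < Real.log 3) :
    Metric.ball x ((Real.exp t - 1) / (Real.exp t + 1) * dist x p) ⊆
        {y : X | y ≠ p ∧
          Real.log (1 + 2 * dist x y / Real.sqrt (dist x p * dist y p)) < t} ∧
      {y : X | y ≠ p ∧
          Real.log (1 + 2 * dist x y / Real.sqrt (dist x p * dist y p)) < t} ⊆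
        Metric.ball x ((Real.exp t - 1) / (3 - Real.exp t) * dist x p) := by
  set s := Real.exp t with hsdef
  have hs1 : 1 ≤ s := Real.one_le_exp ht0
  have hs3 : s < 3 := by
    have := Real.exp_lt_exp.mpr ht
    rwa [Real.exp_log (by norm_num : (0:ℝ) < 3)] at this
  have ha : 0 < dist x p := dist_pos.mpr hx
  set a := dist x p with hadef
  constructor
  · intro y hy
    rw [Metric.mem_ball, dist_comm] at hy
    set u := dist x y with hudef
    have hu0 : 0 ≤ u := dist_nonneg
    have hs : 1 < s := by
      by_contra h
      push_neg at h
      have : (s - 1) / (s + 1) * a ≤ 0 := by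
        apply mul_nonpos_of_nonpos_of_nonneg
        · apply div_nonpos_of_nonpos_of_nonneg <;> nlinarith
        · linarith
      linarith
    set b := dist y p with hbdef
    have htri : a ≤ u + b := dist_triangle x y p
    have hb : 2 * a / (s + 1) < b := by
      rw [div_lt_iff₀ (by linarith)]
      rw [div_mul_eq_mul_div, lt_div_iff₀ (by linarith)] at hy
      nlinarith
    have hb0 : 0 < b := by
      have : 0 < 2 * a / (s + 1) := by positivity
      linarith
    have hyp : y ≠ p := dist_pos.mp hb0
    refine ⟨hyp, ?_⟩
    set w := Real.sqrt (a * b) with hwdef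
    have hw2 : w ^ 2 = a * b := Real.sq_sqrt (by positivity)
    have hw0 : 0 < w := Real.sqrt_pos.mpr (by positivity)
    have key : 2 * u < (s - 1) * w := by
      have hsq : (2 * u) ^ 2 < ((s - 1) * w) ^ 2 := by
        rw [div_mul_eq_mul_div, lt_div_iff₀ (by linarith)] at hy
        have hb' : 2 * a < b * (s + 1) := by
          rw [div_lt_iff₀ (by linarith)] at hb
          linarith
        have hy2 : u ^ 2 * (s + 1) ^ 2 < (s - 1) ^ 2 * a ^ 2 := by
          nlinarith [mul_nonneg hu0 (by linarith : (0:ℝ) ≤ s + 1)]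
        have hstep : 2 * ((s - 1) ^ 2 * a ^ 2) * (s + 1) < (s - 1) ^ 2 * (a * b) * (s + 1) ^ 2 := by
          have hc : (0:ℝ) < (s - 1) ^ 2 * a * (s + 1) :=
            mul_pos (mul_pos (pow_pos (by linarith) 2) ha) (by linarith)
          nlinarith [mul_lt_mul_of_pos_left hb' hc]
        have hden : (0:ℝ) < (s + 1) ^ 2 := by positivity
        have big : (2 * u) ^ 2 * (s + 1) ^ 2 < ((s - 1) * w) ^ 2 * (s + 1) ^ 2 := by
          have hw2' : ((s - 1) * w) ^ 2 = (s - 1) ^ 2 * (a * b) := by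
            rw [mul_pow, hw2]
          rw [hw2']
          nlinarith [hy2, hstep,
            mul_nonneg (mul_nonneg (sq_nonneg (s - 1)) (sq_nonneg a))
              (by linarith : (0:ℝ) ≤ s - 1)]
        exact lt_of_mul_lt_mul_right big hden.le
      exact lt_of_pow_lt_pow_left₀ 2 (mul_nonneg (by linarith) hw0.le) hsq
    rw [Real.log_lt_iff_lt_exp (by positivity), ← hudef, ← hsdef]
    have h' : 2 * u / w < s - 1 := by
      rw [div_lt_iff₀ hw0]
      linarith
    linarith
  · intro y hy
    obtain ⟨hyp, hlt⟩ := hy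
    set u := dist x y with hudef
    set b := dist y p with hbdef
    have hu0 : 0 ≤ u := dist_nonneg
    have hb0 : 0 < b := dist_pos.mpr hyp
    set w := Real.sqrt (a * b) with hwdef
    have hw2 : w ^ 2 = a * b := Real.sq_sqrt (by positivity)
    have hw0 : 0 < w := Real.sqrt_pos.mpr (by positivity)
    have h1 : 1 + 2 * u / w < s := by
      have := (Real.log_lt_iff_lt_exp (by positivity)).mp hlt
      exact this
    have h2 : 2 * u < (s - 1) * w := by
      have h1' : 2 * u / w < s - 1 := by linarith
      rw [div_lt_iff₀ hw0] at h1'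
      linarith
    have htri : b ≤ u + a := by
      have := dist_triangle y x p
      rwa [dist_comm y x] at this
    have hwle : w ≤ (2 * a + u) / 2 := by
      have h : a * b ≤ ((2 * a + u) / 2) ^ 2 := by nlinarith
      calc w = Real.sqrt (a * b) := rfl
        _ ≤ Real.sqrt (((2 * a + u) / 2) ^ 2) := Real.sqrt_le_sqrt h
        _ = (2 * a + u) / 2 := Real.sqrt_sq (by positivity)
    rw [Metric.mem_ball, dist_comm, div_mul_eq_mul_div, lt_div_iff₀ (by linarith)]
    nlinarith
end

section
/- Let f : (X,d₁) → (Y,d₂) be an L-bilipschitz mapping (L ≥ 1). Then for all p ∈ X and x, y ∈ X \ {p}, L^{−2}·τ_p(x,y) ≤ τ_{f(p)}(f(x), f(y)) ≤ L²·τ_p(x,y). -/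
private lemma log_one_add_mul_le {c r : ℝ} (hc : 1 ≤ c) (hr : 0 ≤ r) :
    Real.log (1 + c * r) ≤ c * Real.log (1 + r) := by
  have h := one_add_mul_self_le_rpow_one_add (by linarith : (-1:ℝ) ≤ r) hc
  calc Real.log (1 + c * r) ≤ Real.log ((1 + r) ^ c) :=
        Real.log_le_log (by positivity) h
    _ = c * Real.log (1 + r) := Real.log_rpow (by linarith) c

/-- An L-bilipschitz map is L²-bilipschitz for the scale-invariant Cassinian metric. -/
theorem tau_bilipschitz {X Y : Type*} [MetricSpace X] [MetricSpace Y]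
    (f : X → Y) (L : ℝ) (hL : 1 ≤ L)
    (hbl : ∀ x y : X, dist x y / L ≤ dist (f x) (f y) ∧ dist (f x) (f y) ≤ L * dist x y)
    (p x y : X) (hx : x ≠ p) (hy : y ≠ p) :
    L ^ (-2 : ℤ) * Real.log (1 + 2 * dist x y / Real.sqrt (dist x p * dist y p)) ≤
        Real.log (1 + 2 * dist (f x) (f y) /
          Real.sqrt (dist (f x) (f p) * dist (f y) (f p))) ∧
      Real.log (1 + 2 * dist (f x) (f y) /
          Real.sqrt (dist (f x) (f p) * dist (f y) (f p))) ≤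
        L ^ 2 * Real.log (1 + 2 * dist x y / Real.sqrt (dist x p * dist y p)) := by
  have hL0 : (0:ℝ) < L := lt_of_lt_of_le one_pos hL
  have hxp : 0 < dist x p := dist_pos.mpr hx
  have hyp : 0 < dist y p := dist_pos.mpr hy
  obtain ⟨h1, h2⟩ := hbl x y
  obtain ⟨hfxp, hfxp'⟩ := hbl x p
  obtain ⟨hfyp, hfyp'⟩ := hbl y p
  have hfxp0 : 0 < dist (f x) (f p) := lt_of_lt_of_le (by positivity) hfxp
  have hfyp0 : 0 < dist (f y) (f p) := lt_of_lt_of_le (by positivity) hfyp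
  set a := dist x p
  set b := dist y p
  set a' := dist (f x) (f p)
  set b' := dist (f y) (f p)
  set d := dist x y
  set d' := dist (f x) (f y)
  have hd0 : 0 ≤ d := dist_nonneg
  have hd'0 : 0 ≤ d' := dist_nonneg
  have hs0 : 0 < Real.sqrt (a * b) := Real.sqrt_pos.mpr (by positivity)
  have hs'0 : 0 < Real.sqrt (a' * b') := Real.sqrt_pos.mpr (by positivity)
  have hsq : Real.sqrt (a * b / L ^ 2) = Real.sqrt (a * b) / L := by
    rw [Real.sqrt_div (by positivity), Real.sqrt_sq hL0.le]
  have hsq' : Real.sqrt (a * b * L ^ 2) = Real.sqrt (a * b) * L := by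
    rw [Real.sqrt_mul (by positivity), Real.sqrt_sq hL0.le]
  -- lower sqrt bound
  have hsub : Real.sqrt (a * b) / L ≤ Real.sqrt (a' * b') := by
    rw [← hsq]
    apply Real.sqrt_le_sqrt
    calc a * b / L ^ 2 = (a / L) * (b / L) := by ring
      _ ≤ a' * b' := mul_le_mul hfxp hfyp (by positivity) hfxp0.le
  -- upper sqrt bound
  have hsup : Real.sqrt (a' * b') ≤ Real.sqrt (a * b) * L := by
    rw [← hsq']
    apply Real.sqrt_le_sqrt
    calc a' * b' ≤ (L * a) * (L * b) :=
          mul_le_mul hfxp' hfyp' hfyp0.le (by positivity)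
      _ = a * b * L ^ 2 := by ring
  set r := 2 * d / Real.sqrt (a * b) with hrdef
  set r' := 2 * d' / Real.sqrt (a' * b') with hr'def
  have hr0 : 0 ≤ r := by positivity
  have hr'0 : 0 ≤ r' := by positivity
  have hc1 : (1:ℝ) ≤ L ^ 2 := by nlinarith
  have hc0 : (0:ℝ) < L ^ 2 := by positivity
  -- r' bounds
  have hub : r' ≤ L ^ 2 * r := by
    have : r' ≤ 2 * (L * d) / (Real.sqrt (a * b) / L) := by
      apply div_le_div₀ (by positivity) (by linarith) (by positivity) hsub
    calc r' ≤ 2 * (L * d) / (Real.sqrt (a * b) / L) := this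
      _ = L ^ 2 * r := by rw [hrdef, div_div_eq_mul_div]; ring
  have hlb : r / L ^ 2 ≤ r' := by
    have : 2 * (d / L) / (Real.sqrt (a * b) * L) ≤ r' := by
      apply div_le_div₀ (by positivity) (by linarith) (by positivity) hsup
    calc r / L ^ 2 = 2 * (d / L) / (Real.sqrt (a * b) * L) := by
          rw [hrdef]; ring
      _ ≤ r' := this
  constructor
  · -- lower bound
    have key : Real.log (1 + r) ≤ L ^ 2 * Real.log (1 + r / L ^ 2) := by
      have := log_one_add_mul_le hc1 (show (0:ℝ) ≤ r / L ^ 2 by positivity)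
      rwa [mul_div_cancel₀ _ (ne_of_gt hc0)] at this
    have hmono : Real.log (1 + r / L ^ 2) ≤ Real.log (1 + r') :=
      Real.log_le_log (by positivity) (by linarith)
    have hz : L ^ (-2 : ℤ) = (L ^ 2)⁻¹ := by
      rw [zpow_neg, zpow_two]; ring_nf
    rw [hz]
    rw [inv_mul_le_iff₀ hc0] at *
    calc Real.log (1 + r) ≤ L ^ 2 * Real.log (1 + r / L ^ 2) := key
      _ ≤ L ^ 2 * Real.log (1 + r') := by
          exact mul_le_mul_of_nonneg_left hmono (by positivity)
  · -- upper bound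
    calc Real.log (1 + r') ≤ Real.log (1 + L ^ 2 * r) :=
          Real.log_le_log (by positivity) (by linarith)
      _ ≤ L ^ 2 * Real.log (1 + r) := log_one_add_mul_le hc1 hr0
end

section
/- Let (X,d) be a metric space, p ∈ X, and x, y ∈ X \ {p} with d(x,p) ≤ d(y,p). Then d(x,p) + d(y,p) ≤ 3 d(x,y) + 4 √(d(x,p) d(y,p)). -/
/-- Key intermediate inequality: d(x,p)+d(y,p) ≤ 3 d(x,y) + 4 √(d(x,p)d(y,p)). -/
theorem key_ineq {X : Type*} [MetricSpace X] (p x y : X)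
    (hx : x ≠ p) (hy : y ≠ p) (h : dist x p ≤ dist y p) :
    dist x p + dist y p ≤ 3 * dist x y + 4 * Real.sqrt (dist x p * dist y p) := by
  have ha : (0:ℝ) ≤ dist x p := dist_nonneg
  have ht : (0:ℝ) ≤ dist x y := dist_nonneg
  have htri : dist y p ≤ dist x p + dist x y := by
    have := dist_triangle y x p
    rw [dist_comm y x] at this
    linarith
  have hs : dist x p ≤ Real.sqrt (dist x p * dist y p) := by
    have : Real.sqrt (dist x p * dist x p) ≤ Real.sqrt (dist x p * dist y p) :=
      Real.sqrt_le_sqrt (by nlinarith)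
    rwa [Real.sqrt_mul_self ha] at this
  linarith
end

section
/- In the punctured Euclidean space ℝⁿ \ {0}, with x = e₁ and y = t·e₁ for 0 < t < 1, the ratio j̃_0(x,y)/τ_0(x,y) = (√t + 2(1−t))/(1+t) tends to 1/2 as t → 1⁻ and to 2 as t → 0⁺; hence both constants in (1/2)·j̃_p ≤ τ_p ≤ 2·j̃_p are sharp. -/
open Real Filter Set

private lemma aux_slope_log : Filter.Tendsto (fun t : ℝ => Real.log t / (t - 1))
    (nhdsWithin 1 {(1:ℝ)}ᶜ) (nhds 1) := by
  have h := (Real.hasDerivAt_log one_ne_zero)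
  rw [hasDerivAt_iff_tendsto_slope] at h
  simp only [slope_def_field, inv_one] at h
  refine h.congr (fun t => ?_)
  simp [slope_def_field, div_eq_div_iff]

private lemma aux_div_log : Filter.Tendsto (fun u : ℝ => u / Real.log (1 + u))
    (nhdsWithin 0 {(0:ℝ)}ᶜ) (nhds 1) := by
  have h : HasDerivAt (fun u : ℝ => Real.log (1 + u)) 1 0 := by
    have := ((hasDerivAt_id (0:ℝ)).const_add 1).log (by norm_num)
    simpa using this
  rw [hasDerivAt_iff_tendsto_slope] at h
  have h2 : Filter.Tendsto (fun u : ℝ => Real.log (1 + u) / u)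
      (nhdsWithin 0 {(0:ℝ)}ᶜ) (nhds 1) := by
    refine h.congr fun t => ?_
    simp [slope_def_field]
  have h3 := h2.inv₀ one_ne_zero
  simp only [inv_one] at h3
  refine h3.congr fun t => ?_
  rw [inv_div]

/-- On `Ioo 0 1`, the big expression simplifies to `(-log t) / log (1 + 2(1-t)/√t)`. -/
private lemma aux_key_eq (n : ℕ) (hn : 0 < n) (x : EuclideanSpace ℝ (Fin n))
    (hx : x = EuclideanSpace.single ⟨0, hn⟩ 1) {t : ℝ} (ht : t ∈ Set.Ioo (0:ℝ) 1) :
    Real.log (1 + dist x (t • x) / min (dist x 0) (dist (t • x) 0)) /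
      Real.log (1 + 2 * dist x (t • x) / Real.sqrt (dist x 0 * dist (t • x) 0))
    = (-Real.log t) / Real.log (1 + 2 * (1 - t) / Real.sqrt t) := by
  have hx1 : ‖x‖ = 1 := by rw [hx, EuclideanSpace.norm_single]; simp
  have hd1 : dist x 0 = 1 := by rw [dist_zero_right, hx1]
  have hd2 : dist (t • x) 0 = t := by
    rw [dist_zero_right, norm_smul, hx1, mul_one, Real.norm_eq_abs, abs_of_pos ht.1]
  have hd3 : dist x (t • x) = 1 - t := by
    rw [dist_eq_norm]
    have h : x - t • x = (1 - t) • x := by rw [sub_smul, one_smul]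
    rw [h, norm_smul, hx1, mul_one, Real.norm_eq_abs, abs_of_pos (by linarith [ht.2])]
  rw [hd1, hd2, hd3, one_mul, min_eq_right ht.2.le]
  have ht0 : t ≠ 0 := ht.1.ne'
  have h1 : (1 : ℝ) + (1 - t) / t = t⁻¹ := by
    field_simp
    ring
  rw [h1, Real.log_inv]

/-- Algebraic identity used near `t = 1`. -/
private lemma aux_prod_eq {t : ℝ} (ht : t ∈ Set.Ioo (0:ℝ) 1) :
    (Real.log t / (t - 1)) * (Real.sqrt t / 2) *
      ((2 * (1 - t) / Real.sqrt t) / Real.log (1 + 2 * (1 - t) / Real.sqrt t))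
    = (-Real.log t) / Real.log (1 + 2 * (1 - t) / Real.sqrt t) := by
  set c := Real.log (1 + 2 * (1 - t) / Real.sqrt t) with hc
  have hst : Real.sqrt t ≠ 0 := (Real.sqrt_pos.mpr ht.1).ne'
  have hd : -(2 * (1 - t)) ≠ 0 := by
    have : (0:ℝ) < 2 * (1 - t) := by nlinarith [ht.2]
    exact neg_ne_zero.mpr this.ne'
  rw [div_mul_div_comm, div_mul_div_comm]
  rw [show Real.log t * Real.sqrt t * (2 * (1 - t) / Real.sqrt t)
        = (-Real.log t) * -(2 * (1 - t)) by field_simp,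
      show (t - 1) * 2 * c = c * -(2 * (1 - t)) by ring]
  exact mul_div_mul_right _ _ hd

/-- Sharpness of the comparison between j̃ and τ: in ℝⁿ \ {0} with x = e₁,
y = t e₁, the ratio j̃₀/τ₀ tends to 1/2 as t → 1⁻ and to 2 as t → 0⁺. -/
theorem jtilde_tau_ratio_sharp (n : ℕ) (hn : 0 < n)
    (x : EuclideanSpace ℝ (Fin n)) (hx : x = EuclideanSpace.single ⟨0, hn⟩ 1) :
    Filter.Tendsto (fun t : ℝ =>
        Real.log (1 + dist x (t • x) / min (dist x 0) (dist (t • x) 0)) /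
          Real.log (1 + 2 * dist x (t • x) / Real.sqrt (dist x 0 * dist (t • x) 0)))
      (nhdsWithin 1 (Set.Ioo 0 1)) (nhds (1 / 2)) ∧
    Filter.Tendsto (fun t : ℝ =>
        Real.log (1 + dist x (t • x) / min (dist x 0) (dist (t • x) 0)) /
          Real.log (1 + 2 * dist x (t • x) / Real.sqrt (dist x 0 * dist (t • x) 0)))
      (nhdsWithin 0 (Set.Ioo 0 1)) (nhds 2) := by
  set F := fun t : ℝ => (-Real.log t) / Real.log (1 + 2 * (1 - t) / Real.sqrt t) with hF
  have hmem1 : ∀ᶠ t in nhdsWithin (1:ℝ) (Set.Ioo 0 1), t ∈ Set.Ioo (0:ℝ) 1 :=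
    eventually_mem_nhdsWithin
  have hmem0 : ∀ᶠ t in nhdsWithin (0:ℝ) (Set.Ioo 0 1), t ∈ Set.Ioo (0:ℝ) 1 :=
    eventually_mem_nhdsWithin
  constructor
  · -- limit at 1
    refine Filter.Tendsto.congr' (hmem1.mono fun t ht => (aux_key_eq n hn x hx ht).symm) ?_
    -- F tends to 1/2 at 1⁻
    set b := fun t : ℝ => 2 * (1 - t) / Real.sqrt t with hb
    have hmono : nhdsWithin (1:ℝ) (Set.Ioo 0 1) ≤ nhdsWithin 1 {(1:ℝ)}ᶜ :=
      nhdsWithin_mono 1 (fun t ht => ne_of_lt ht.2)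
    have t1 : Filter.Tendsto (fun t : ℝ => Real.log t / (t - 1))
        (nhdsWithin 1 (Set.Ioo 0 1)) (nhds 1) := aux_slope_log.mono_left hmono
    have t2 : Filter.Tendsto (fun t : ℝ => Real.sqrt t / 2)
        (nhdsWithin 1 (Set.Ioo 0 1)) (nhds (1 / 2)) := by
      have : Filter.Tendsto (fun t : ℝ => Real.sqrt t / 2) (nhds 1) (nhds (1 / 2)) := by
        have := (Real.continuous_sqrt.tendsto 1).div_const 2
        simpa using this
      exact this.mono_left nhdsWithin_le_nhds
    have tb : Filter.Tendsto b (nhdsWithin 1 (Set.Ioo 0 1)) (nhdsWithin 0 {(0:ℝ)}ᶜ) := by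
      rw [tendsto_nhdsWithin_iff]
      constructor
      · have h0 : Filter.Tendsto b (nhds 1) (nhds 0) := by
          have hcont : ContinuousAt b 1 := by
            apply ContinuousAt.div
            · fun_prop
            · exact Real.continuous_sqrt.continuousAt
            · simp
          have : b 1 = 0 := by simp [hb]
          rw [← this]
          exact hcont
        exact h0.mono_left nhdsWithin_le_nhds
      · exact hmem1.mono fun t ht => by
          have h1 : 0 < 2 * (1 - t) := by nlinarith [ht.2]
          have h2 : 0 < Real.sqrt t := Real.sqrt_pos.mpr ht.1
          exact (div_pos h1 h2).ne'
    have t3 : Filter.Tendsto (fun t : ℝ => b t / Real.log (1 + b t))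
        (nhdsWithin 1 (Set.Ioo 0 1)) (nhds 1) := aux_div_log.comp tb
    have tprod := (t1.mul t2).mul t3
    rw [show (1:ℝ) * (1 / 2) * 1 = 1 / 2 by norm_num] at tprod
    refine tprod.congr' (hmem1.mono fun t ht => ?_)
    exact aux_prod_eq ht
  · -- limit at 0
    refine Filter.Tendsto.congr' (hmem0.mono fun t ht => (aux_key_eq n hn x hx ht).symm) ?_
    set G := fun t : ℝ => Real.log (Real.sqrt t + 2 - 2 * t) / (-Real.log t) + 1 / 2 with hG
    have hmono : nhdsWithin (0:ℝ) (Set.Ioo 0 1) ≤ nhdsWithin 0 (Set.Ioi 0) :=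
      nhdsWithin_mono 0 (fun t ht => ht.1)
    have tA : Filter.Tendsto (fun t : ℝ => Real.log (Real.sqrt t + 2 - 2 * t))
        (nhdsWithin 0 (Set.Ioo 0 1)) (nhds (Real.log 2)) := by
      have hcont : Filter.Tendsto (fun t : ℝ => Real.sqrt t + 2 - 2 * t) (nhds 0) (nhds 2) := by
        have hc : Continuous fun t : ℝ => Real.sqrt t + 2 - 2 * t := by fun_prop
        have h := hc.tendsto 0
        simpa using h
      have hlog : Filter.Tendsto Real.log (nhds (2:ℝ)) (nhds (Real.log 2)) :=
        (Real.continuousAt_log two_ne_zero).tendsto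
      exact (hlog.comp hcont).mono_left nhdsWithin_le_nhds
    have tL : Filter.Tendsto (fun t : ℝ => -Real.log t)
        (nhdsWithin 0 (Set.Ioo 0 1)) Filter.atTop := by
      have := Real.tendsto_log_nhdsGT_zero
      exact (tendsto_neg_atBot_atTop.comp (this.mono_left hmono))
    have tG : Filter.Tendsto G (nhdsWithin 0 (Set.Ioo 0 1)) (nhds (1 / 2)) := by
      have h := (tA.div_atTop tL).add (tendsto_const_nhds (x := (1/2 : ℝ)))
      rw [zero_add] at h
      exact h
    have tGinv := tG.inv₀ (by norm_num)
    rw [show ((1:ℝ)/2)⁻¹ = 2 by norm_num] at tGinv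
    refine tGinv.congr' (hmem0.mono fun t ht => ?_)
    -- show G t ⁻¹ = F t
    have hst : (0:ℝ) < Real.sqrt t := Real.sqrt_pos.mpr ht.1
    have hL : Real.log t < 0 := Real.log_neg ht.1 ht.2
    have hnum : (0:ℝ) < Real.sqrt t + 2 - 2 * t := by nlinarith [ht.2, hst]
    have hsplit : Real.log (1 + 2 * (1 - t) / Real.sqrt t)
        = Real.log (Real.sqrt t + 2 - 2 * t) - Real.log t / 2 := by
      have h1 : (1:ℝ) + 2 * (1 - t) / Real.sqrt t
          = (Real.sqrt t + 2 - 2 * t) / Real.sqrt t := by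
        field_simp; ring
      rw [h1, Real.log_div hnum.ne' hst.ne', Real.log_sqrt ht.1.le]
    have hLne : (-Real.log t) ≠ 0 := (neg_pos.mpr hL).ne'
    have h2 : G t = (Real.log (Real.sqrt t + 2 - 2 * t) - Real.log t / 2) / (-Real.log t) := by
      simp only [hG]
      rw [eq_div_iff hLne, add_mul, div_mul_cancel₀ _ hLne]
      ring
    rw [h2, inv_div]
    show _ = -Real.log t / Real.log (1 + 2 * (1 - t) / Real.sqrt t)
    rw [hsplit]
end
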